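/- Let G be a group with a finite generating set X having the loop shortening property with constant k > 0, and consider the finite presentation ⟨X | R⟩ of G where R is the set of all words r over X ∪ X⁻¹ with |r| ≤ 2k+2 representing the identity of G. Then every word w over X ∪ X⁻¹ representing the identity of G has area A(w) ≤ |w|². In particular G has a quadratic isoperimetric function. -/

import Mathlib

/-! Basic notions for a group `G` with a generating set `X`:
words over `X ∪ X⁻¹`, the word metric, paths, loops and fellow traveling. -/

namespace LoopShortening

variable {G : Type*} [Group G]

/-- `w` is a word over `X ∪ X⁻¹`: every letter of `w` lies in `X ∪ X⁻¹`. -/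
def IsWord (X : Set G) (w : List G) : Prop := ∀ x ∈ w, x ∈ X ∨ x⁻¹ ∈ X

/-- The word metric with respect to `X`: `wdist X g h` is the least `n` such that
`g⁻¹h` is a product of `n` elements of `X ∪ X⁻¹`. -/
noncomputable def wdist (X : Set G) (g h : G) : ℕ :=
  sInf {n : ℕ | ∃ l : List G, IsWord X l ∧ l.length = n ∧ g * l.prod = h}

/-- The point at time `t ∈ ℕ` along the path based at `g₀` labelled by the word `w`;
for `t ≥ |w|` this is the endpoint of the path. -/
def pathAt (g₀ : G) (w : List G) (t : ℕ) : G := g₀ * (w.take t).prod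

/-- The word `w` labels a loop (its evaluation in `G` is the identity, so the
path it labels ends where it starts). -/
def IsLoop (w : List G) : Prop := w.prod = 1

/-- The paths based at `g₀` and `h₀` labelled by `w` and `u` synchronously
`k`-fellow travel. -/
def SyncFellow (X : Set G) (k : ℕ) (g₀ : G) (w : List G) (h₀ : G) (u : List G) : Prop :=
  ∀ t : ℕ, wdist X (pathAt g₀ w t) (pathAt h₀ u t) ≤ k

/-- The paths based at `g₀` and `h₀` labelled by `w` and `u` asynchronously
`k`-fellow travel: there is a nondecreasing unbounded reparameterization `φ`. -/
def AsyncFellow (X : Set G) (k : ℕ) (g₀ : G) (w : List G) (h₀ : G) (u : List G) : Prop :=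
  ∃ φ : ℕ → ℕ, Monotone φ ∧ (∀ m : ℕ, ∃ t : ℕ, m ≤ φ t) ∧
    ∀ t : ℕ, wdist X (pathAt g₀ w t) (pathAt h₀ u (φ t)) ≤ k

lemma exists_preword {X : Set G} {u : List G} (hu : IsWord X u) :
    ∃ u' : List (X × Bool),
      u'.map (fun p => cond p.2 (p.1 : G) (p.1 : G)⁻¹) = u := by
  induction u with
  | nil => exact ⟨[], rfl⟩
  | cons a l ih =>
    obtain ⟨l', hl'⟩ := ih (fun x hx => hu x (List.mem_cons_of_mem _ hx))
    rcases hu a (List.mem_cons_self) with h | h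
    · exact ⟨(⟨a, h⟩, true) :: l', by simp [hl']⟩
    · exact ⟨(⟨a⁻¹, h⟩, false) :: l', by simp [hl']⟩

lemma exists_connect {X : Set G} (hgen : Subgroup.closure X = ⊤) {g h : G} {k : ℕ}
    (hd : wdist X g h ≤ k) :
    ∃ c : List (X × Bool), c.length ≤ k ∧
      FreeGroup.lift (fun x : X => (x : G)) (FreeGroup.mk c) = g⁻¹ * h := by
  have hmem : g⁻¹ * h ∈ Subgroup.closure X := by rw [hgen]; trivial
  have hmem2 : g⁻¹ * h ∈ Submonoid.closure (X ∪ X⁻¹) := by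
    rw [← Subgroup.closure_toSubmonoid]; exact hmem
  obtain ⟨l, hl1, hl2⟩ := Submonoid.exists_list_of_mem_closure hmem2
  have hw : IsWord X l := fun x hx => by
    rcases hl1 x hx with h | h
    · exact Or.inl h
    · exact Or.inr (Set.mem_inv.mp h)
  have hne : {n : ℕ | ∃ l : List G, IsWord X l ∧ l.length = n ∧ g * l.prod = h}.Nonempty :=
    ⟨l.length, l, hw, rfl, by rw [hl2]; group⟩
  obtain ⟨l₀, hl₀w, hl₀len, hl₀p⟩ := Nat.sInf_mem hne
  obtain ⟨c, hc⟩ := exists_preword hl₀w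
  refine ⟨c, ?_, ?_⟩
  · calc c.length = l₀.length := by rw [← hc]; simp
    _ ≤ k := le_trans (le_of_eq hl₀len) hd
  · rw [FreeGroup.lift_mk, hc, ← mul_left_cancel_iff (a := g), ← mul_assoc, hl₀p]; group

lemma conj_prod {α : Type*} [Group α] (c : α) (l : List α) :
    c * l.prod * c⁻¹ = (l.map fun x => c * x * c⁻¹).prod := by
  induction l with
  | nil => simp
  | cons a t ih =>
    simp only [List.map_cons, List.prod_cons, ← ih]
    group

/-- If `(G,X)` has the loop shortening property with constant `k > 0`, then with
respect to the finite presentation `⟨X | R⟩` of `G`, where `R` is the set of all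
words over `X ∪ X⁻¹` of length at most `2k+2` representing the identity of `G`,
every word `w` over `X ∪ X⁻¹` representing the identity of `G` has area
`A(w) ≤ |w|²`: it is equal in the free group on `X` to a product of at most `|w|²`
conjugates of relators in `R ∪ R⁻¹`. In particular `G` has a quadratic
isoperimetric function. -/
theorem loopShortening_quadratic_isoperimetric {G : Type*} [Group G] (X : Set G)
    (hfin : X.Finite) (hgen : Subgroup.closure X = ⊤) (k : ℕ) (hk : 0 < k)
    -- `(G,X)` has the loop shortening property with constant `k`:
    (hLSP : ∀ (g₀ : G) (w : List G), IsWord X w → IsLoop w → w ≠ [] →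
      ∃ (h₀ : G) (u : List G), IsWord X u ∧ IsLoop u ∧ u.length < w.length ∧
        SyncFellow X k g₀ w h₀ u)
    -- the relator set `R`:
    (R : Set (FreeGroup X))
    (hR : R = {r : FreeGroup X |
        FreeGroup.lift (fun x : X => (x : G)) r = 1 ∧
        ∃ l : List (X × Bool), l.length ≤ 2 * k + 2 ∧ FreeGroup.mk l = r}) :
    -- every word over `X ∪ X⁻¹` representing `1 ∈ G` has area at most `|w|²`:
    ∀ w : List (X × Bool),
      FreeGroup.lift (fun x : X => (x : G)) (FreeGroup.mk w) = 1 →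
      ∃ m : ℕ, m ≤ w.length ^ 2 ∧
        ∃ g r : Fin m → FreeGroup X, (∀ i, r i ∈ R ∨ (r i)⁻¹ ∈ R) ∧
          FreeGroup.mk w = (List.ofFn (fun i => g i * r i * (g i)⁻¹)).prod := by
  set φ := FreeGroup.lift (fun x : X => (x : G)) with hφ
  set ev : X × Bool → G := fun p => cond p.2 (p.1 : G) (p.1 : G)⁻¹ with hev
  have hφmk : ∀ l : List (X × Bool), φ (FreeGroup.mk l) = (l.map ev).prod := by
    intro l; rw [hφ, FreeGroup.lift_mk]
  suffices H : ∀ n : ℕ, ∀ w : List (X × Bool), w.length ≤ n →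
      φ (FreeGroup.mk w) = 1 →
      ∃ m : ℕ, m ≤ w.length ^ 2 ∧
        ∃ g r : Fin m → FreeGroup X, (∀ i, r i ∈ R ∨ (r i)⁻¹ ∈ R) ∧
          FreeGroup.mk w = (List.ofFn (fun i => g i * r i * (g i)⁻¹)).prod by
    intro w hw; exact H w.length w le_rfl hw
  intro n
  induction n with
  | zero =>
    intro w hlen hw
    have : w = [] := List.length_eq_zero_iff.mp (Nat.le_zero.mp hlen)
    subst this
    refine ⟨0, by simp, fun i => i.elim0, fun i => i.elim0, fun i => i.elim0, ?_⟩
    simp [← FreeGroup.one_eq_mk]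
  | succ n ih =>
    intro w hlen hw
    by_cases hnil : w = []
    · subst hnil
      refine ⟨0, by simp, fun i => i.elim0, fun i => i.elim0, fun i => i.elim0, ?_⟩
      simp [← FreeGroup.one_eq_mk]
    -- the G-word labelled by w
    set wG : List G := w.map ev with hwG
    have hwGword : IsWord X wG := by
      intro x hx
      simp only [hwG, List.mem_map] at hx
      obtain ⟨p, -, rfl⟩ := hx
      cases hb : p.2 <;> simp [hev, hb, p.1.2]
    have hwGloop : IsLoop wG := by
      rw [IsLoop, ← hφmk w]; exact hw
    have hwGne : wG ≠ [] := by simpa [hwG] using hnil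
    obtain ⟨h₀, u, huW, huL, hulen, hsf⟩ := hLSP 1 wG hwGword hwGloop hwGne
    obtain ⟨u', hu'⟩ := exists_preword huW
    have hu'len : u'.length = u.length := by rw [← hu']; simp
    set N := w.length with hN
    have hNwG : wG.length = N := by simp [hwG, hN]
    have hN1 : 1 ≤ N := by
      rw [hN]; exact List.length_pos_iff.mpr hnil
    have huN : u.length < N := by rw [← hNwG]; exact hulen
    -- induction hypothesis applied to u'
    have hu'1 : φ (FreeGroup.mk u') = 1 := by
      rw [hφmk, hu']; exact huL
    obtain ⟨m', hm'le, g', r', hr', hprod'⟩ :=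
      ih u' (by omega) hu'1
    -- connecting words
    have hconn : ∀ t : ℕ, ∃ c : List (X × Bool), c.length ≤ k ∧
        φ (FreeGroup.mk c) = (pathAt 1 wG t)⁻¹ * pathAt h₀ u t :=
      fun t => exists_connect hgen (hsf t)
    choose D hDlen hDval using hconn
    set C : ℕ → List (X × Bool) := fun t => if t = 0 ∨ t = N then D 0 else D t with hC
    have hClen : ∀ t, (C t).length ≤ k := by
      intro t; rw [hC]; dsimp only; split <;> apply hDlen
    have hpath0 : pathAt 1 wG 0 = 1 := by simp [pathAt]
    have hpathN : pathAt 1 wG N = 1 := by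
      rw [pathAt, List.take_of_length_le (le_of_eq hNwG), hwGloop, mul_one]
    have hqath0 : pathAt h₀ u 0 = h₀ := by simp [pathAt]
    have hqathN : pathAt h₀ u N = h₀ := by
      rw [pathAt, List.take_of_length_le huN.le, huL, mul_one]
    have hCval : ∀ t ≤ N, φ (FreeGroup.mk (C t)) = (pathAt 1 wG t)⁻¹ * pathAt h₀ u t := by
      intro t ht
      rw [hC]; dsimp only
      split
      · rename_i hsplit
        rcases hsplit with rfl | rfl
        · exact hDval 0
        · rw [hpathN, hqathN, ← hpath0, ← hqath0]; exact hDval 0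
      · exact hDval t
    have hC0N : C N = C 0 := by simp [hC]
    -- free group prefixes and letters
    set FW : ℕ → FreeGroup X := fun t => FreeGroup.mk (w.take t) with hFW
    set FU : ℕ → FreeGroup X := fun t => FreeGroup.mk (u'.take t) with hFU
    set Xl : ℕ → FreeGroup X := fun t => FreeGroup.mk (w[t]?.toList) with hXl
    set Yl : ℕ → FreeGroup X := fun t => FreeGroup.mk (u'[t]?.toList) with hYl
    set ρ : ℕ → FreeGroup X := fun t =>
      (FreeGroup.mk (C t))⁻¹ * Xl t * FreeGroup.mk (C (t+1)) * (Yl t)⁻¹ with hρ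
    have hWsucc : ∀ t, FW (t+1) = FW t * Xl t := by
      intro t
      rw [hFW, hXl]; dsimp only
      rw [List.take_succ, ← FreeGroup.mul_mk]
    have hUsucc : ∀ t, FU (t+1) = FU t * Yl t := by
      intro t
      rw [hFU, hYl]; dsimp only
      rw [List.take_succ, ← FreeGroup.mul_mk]
    have hWval : ∀ t, φ (FW t) = pathAt 1 wG t := by
      intro t
      rw [hFW]; dsimp only
      rw [hφmk, pathAt, one_mul, hwG, List.map_take]
    have hu'' : List.map ev u' = u := hu'
    have hUval : ∀ t, φ (FU t) = h₀⁻¹ * pathAt h₀ u t := by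
      intro t
      rw [hFU]; dsimp only
      rw [hφmk, pathAt, List.map_take, hu'']; group
    have hXval : ∀ t, φ (Xl t) = (pathAt 1 wG t)⁻¹ * pathAt 1 wG (t+1) := by
      intro t
      have h1 := congrArg φ (hWsucc t)
      rw [map_mul, hWval, hWval] at h1
      rw [h1]; group
    have hYval : ∀ t, φ (Yl t) = (pathAt h₀ u t)⁻¹ * pathAt h₀ u (t+1) := by
      intro t
      have h1 := congrArg φ (hUsucc t)
      rw [map_mul, hUval, hUval] at h1
      have h2 : φ (Yl t) = (φ (FU t))⁻¹ * φ (FU (t+1)) := by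
        have := congrArg φ (hUsucc t); rw [map_mul] at this; rw [this]; group
      rw [h2, hUval, hUval]; group
    have hoptlen : ∀ (o : Option (↑X × Bool)), o.toList.length ≤ 1 := by
      rintro (_|_) <;> simp
    have hρR : ∀ t, t < N → ρ t ∈ R := by
      intro t ht
      rw [hR]
      constructor
      · show φ (ρ t) = 1
        rw [hρ]; dsimp only
        rw [map_mul, map_mul, map_mul, map_inv, map_inv,
          hCval t ht.le, hCval (t+1) ht, hXval, hYval]
        group
      · refine ⟨FreeGroup.invRev (C t) ++ w[t]?.toList ++ C (t+1) ++
          FreeGroup.invRev (u'[t]?.toList), ?_, ?_⟩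
        · simp only [List.length_append, FreeGroup.invRev_length]
          have := hClen t; have := hClen (t+1)
          have := hoptlen w[t]?; have := hoptlen u'[t]?
          omega
        · rw [hρ, hXl, hYl]; dsimp only
          simp only [← FreeGroup.mul_mk, ← FreeGroup.inv_mk]
    -- telescoping
    have hTel : ∀ t, t ≤ N → FW t * FreeGroup.mk (C t) * (FU t)⁻¹ =
        FreeGroup.mk (C 0) *
          (List.ofFn (fun j : Fin t => FU j * ρ j * (FU j)⁻¹)).prod := by
      intro t
      induction t with
      | zero =>
        intro _
        rw [hFW, hFU]; dsimp only
        simp [← FreeGroup.one_eq_mk]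
      | succ t iht =>
        intro ht
        have h1 := iht (Nat.le_of_succ_le ht)
        have key : FW (t+1) * FreeGroup.mk (C (t+1)) * (FU (t+1))⁻¹
            = (FW t * FreeGroup.mk (C t) * (FU t)⁻¹) * (FU t * ρ t * (FU t)⁻¹) := by
          rw [hWsucc, hUsucc, hρ]; dsimp only; group
        have hofn : (List.ofFn (fun j : Fin (t+1) => FU ↑j * ρ ↑j * (FU ↑j)⁻¹)) =
            (List.ofFn (fun j : Fin t => FU ↑j * ρ ↑j * (FU ↑j)⁻¹))
              ++ [FU t * ρ t * (FU t)⁻¹] := by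
          rw [List.ofFn_succ', List.concat_eq_append]
          congr 1
        rw [key, h1, hofn, List.prod_append, List.prod_singleton, mul_assoc]
    -- evaluate the telescoping identity at t = N
    have hTelN := hTel N le_rfl
    have hWN : FW N = FreeGroup.mk w := by
      rw [hFW]; dsimp only
      rw [List.take_of_length_le (le_of_eq hN.symm)]
    have hUN : FU N = FreeGroup.mk u' := by
      rw [hFU]; dsimp only
      rw [List.take_of_length_le (by omega)]
    rw [hWN, hUN, hC0N] at hTelN
    set P := (List.ofFn (fun j : Fin N => FU j * ρ j * (FU j)⁻¹)).prod with hP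
    have hmkw : FreeGroup.mk w =
        FreeGroup.mk (C 0) * (P * FreeGroup.mk u') * (FreeGroup.mk (C 0))⁻¹ := by
      have h2 : FreeGroup.mk w =
          (FreeGroup.mk w * FreeGroup.mk (C 0) * (FreeGroup.mk u')⁻¹) *
            (FreeGroup.mk u' * (FreeGroup.mk (C 0))⁻¹) := by group
      rw [h2, hTelN]; group
    refine ⟨N + m', ?_,
      fun i => FreeGroup.mk (C 0) * Fin.append (fun j : Fin N => FU j) g' i,
      Fin.append (fun j : Fin N => ρ j) r', ?_, ?_⟩
    · have ha : u'.length + 1 ≤ N := by omega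
      have h3 : N * (u'.length + 1) ≤ N * N := Nat.mul_le_mul_left N ha
      have h4 : u'.length * u'.length ≤ N * u'.length :=
        Nat.mul_le_mul_right u'.length (by omega)
      have h5 : m' ≤ u'.length * u'.length := by
        calc m' ≤ u'.length ^ 2 := hm'le
        _ = u'.length * u'.length := sq u'.length
      have : N + m' ≤ N * N := by nlinarith
      calc N + m' ≤ N * N := this
      _ = N ^ 2 := (sq N).symm
    · intro i
      refine Fin.addCases (fun j => ?_) (fun j => ?_) i
      · left; rw [Fin.append_left]; exact hρR j j.isLt
      · rw [Fin.append_right]; exact hr' j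
    · set c₀ := FreeGroup.mk (C 0) with hc₀
      set A := Fin.append (fun j : Fin N => FU j) g' with hA
      set B := Fin.append (fun j : Fin N => ρ j) r' with hB
      have hfun : (fun i : Fin (N + m') => c₀ * A i * B i * (c₀ * A i)⁻¹) =
          (fun x => c₀ * x * c₀⁻¹) ∘ (fun i => A i * B i * (A i)⁻¹) := by
        funext i; dsimp only [Function.comp]; group
      show FreeGroup.mk w =
        (List.ofFn fun i : Fin (N + m') => c₀ * A i * B i * (c₀ * A i)⁻¹).prod
      rw [hfun, ← List.map_ofFn, ← conj_prod]
      have hAB : (fun i : Fin (N + m') => A i * B i * (A i)⁻¹) =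
          Fin.append (fun j : Fin N => FU j * ρ j * (FU j)⁻¹)
            (fun j : Fin m' => g' j * r' j * (g' j)⁻¹) := by
        funext i
        refine Fin.addCases (fun j => ?_) (fun j => ?_) i
        · rw [hA, hB]; simp [Fin.append_left]
        · rw [hA, hB]; simp [Fin.append_right]
      rw [hAB, List.ofFn_fin_append, List.prod_append, ← hprod', ← hP]
      exact hmkw


end LoopShortening
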